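/- If f ∈ 𝒪_F[[T]]^× satisfies the Coleman norm relation 𝒩(f) = σ_F(f) (i.e., ∏_{ξ ∈ μ_p} f(ξ(1+T) - 1) = (σ_F f)((1+T)^p - 1)), then its integral logarithm derivative g := (Df/f) - [p]σ_F(Df/f) satisfies 𝔗(g) = 0, where D = (1+T)d/dT, ([p]h)(T) = h((1+T)^p - 1), and 𝔗 is the reduced trace with ([p]𝔗h)(T) = (1/p)∑_{ξ∈μ_p} h(ξ(1+T)-1). -/

import Mathlib

open PowerSeries

/-- The (analytic) substitution `f(T) ↦ f(ξ(1+T) - 1)` for `‖ξ - 1‖ < 1`, defined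
coefficientwise:  the coefficient of `T^m` in `f(ξ(1+T)-1)` is
`∑_{n≥0} f_{m+n} · C(m+n, m) · ξ^m · (ξ-1)^n` (a convergent series in `K`). -/
noncomputable def twistSubst {K : Type*} [NontriviallyNormedField K] [CompleteSpace K]
    (ξ : K) (f : PowerSeries K) : PowerSeries K :=
  PowerSeries.mk fun m =>
    ∑' n : ℕ, coeff (m + n) f * ((m + n).choose m : K) * ξ ^ m * (ξ - 1) ^ n

/-- The ring operator `[p] : f(T) ↦ f((1+T)^p - 1)` (a formal substitution). -/
noncomputable def pSubst {K : Type*} [Field K] (p : ℕ) (f : PowerSeries K) :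
    PowerSeries K :=
  PowerSeries.mk fun m =>
    ∑ n ∈ Finset.range (m + 1),
      coeff n f * coeff m (((1 + X : PowerSeries K) ^ p - 1) ^ n)

open Finset

set_option linter.unusedSectionVars false
set_option linter.unnecessarySimpa false

namespace ColemanAux

variable {K : Type*} [NontriviallyNormedField K] [CompleteSpace K] [IsUltrametricDist K]

/-- All coefficients have norm at most 1. -/
def Bnd (f : PowerSeries K) : Prop := ∀ n, ‖coeff n f‖ ≤ 1

theorem Bnd.add {f g : PowerSeries K} (hf : Bnd f) (hg : Bnd g) : Bnd (f + g) := fun n => by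
  rw [map_add]
  exact (IsUltrametricDist.norm_add_le_max _ _).trans (max_le (hf n) (hg n))

theorem Bnd.neg {f : PowerSeries K} (hf : Bnd f) : Bnd (-f) := fun n => by
  rw [map_neg, norm_neg]; exact hf n

theorem Bnd.sub {f g : PowerSeries K} (hf : Bnd f) (hg : Bnd g) : Bnd (f - g) := by
  rw [sub_eq_add_neg]; exact hf.add hg.neg

theorem Bnd.mul {f g : PowerSeries K} (hf : Bnd f) (hg : Bnd g) : Bnd (f * g) := fun n => by
  rw [PowerSeries.coeff_mul]
  refine IsUltrametricDist.norm_sum_le_of_forall_le_of_nonneg zero_le_one fun i _ => ?_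
  rw [norm_mul]
  exact mul_le_one₀ (hf _) (norm_nonneg _) (hg _)

theorem Bnd.one : Bnd (1 : PowerSeries K) := fun n => by
  rw [coeff_one]
  split <;> simp

theorem Bnd.pow {f : PowerSeries K} (hf : Bnd f) (k : ℕ) : Bnd (f ^ k) := by
  induction k with
  | zero => simpa using Bnd.one
  | succ k ih => rw [pow_succ]; exact ih.mul hf

theorem Bnd.sum {ι : Type*} {s : Finset ι} {F : ι → PowerSeries K}
    (h : ∀ i ∈ s, Bnd (F i)) : Bnd (∑ i ∈ s, F i) := fun n => by
  rw [map_sum]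
  exact IsUltrametricDist.norm_sum_le_of_forall_le_of_nonneg zero_le_one fun i hi => h i hi n

theorem Bnd.C {c : K} (hc : ‖c‖ ≤ 1) : Bnd (PowerSeries.C c) := fun n => by
  rw [coeff_C]; split <;> simpa [*]

theorem Bnd_X : Bnd (X : PowerSeries K) := fun n => by
  rw [coeff_X]; split <;> simp

theorem Bnd_onePlusX : Bnd (1 + X : PowerSeries K) := Bnd.add Bnd.one Bnd_X

theorem Bnd.deriv {f : PowerSeries K} (hf : Bnd f) : Bnd (d⁄dX K f) := fun n => by
  rw [coeff_derivative, norm_mul]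
  have : ‖((n : K) + 1)‖ ≤ 1 := by
    rw [show ((n : K) + 1) = ((n + 1 : ℕ) : K) by push_cast; ring]
    exact IsUltrametricDist.norm_natCast_le_one K _
  exact mul_le_one₀ (hf _) (norm_nonneg _) this

theorem Bnd.map {f : PowerSeries K} (hf : Bnd f) (σ : K →+* K) (hσ : ∀ x, ‖σ x‖ = ‖x‖) :
    Bnd (PowerSeries.map σ f) := fun n => by
  rw [PowerSeries.coeff_map, hσ]; exact hf n

theorem Bnd.inv {f : PowerSeries K} (hf : Bnd f) (h0 : ‖constantCoeff f‖ = 1) :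
    Bnd f⁻¹ := by
  intro n
  induction n using Nat.strong_induction_on with
  | _ n ih =>
    rw [PowerSeries.coeff_inv]
    split
    · rw [norm_inv, h0, inv_one]
    · rw [norm_mul, norm_neg, norm_inv, h0, inv_one, one_mul]
      refine IsUltrametricDist.norm_sum_le_of_forall_le_of_nonneg zero_le_one fun x hx => ?_
      split
      · rename_i hlt
        rw [norm_mul]
        exact mul_le_one₀ (hf _) (norm_nonneg _) (ih _ hlt)
      · simp

/-- norm of tsum bound in ultrametric fields -/
theorem norm_tsum_le {f : ℕ → K} (hf : Summable f) {C : ℝ} (hC : 0 ≤ C)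
    (h : ∀ n, ‖f n‖ ≤ C) : ‖∑' n, f n‖ ≤ C := by
  refine le_of_tendsto' (hf.hasSum.tendsto_sum_nat.norm) fun N => ?_
  exact IsUltrametricDist.norm_sum_le_of_forall_le_of_nonneg hC fun i _ => h i

theorem eq_zero_of_forall_norm_le_pow {x : K} {C r : ℝ} (hr0 : 0 ≤ r) (hr : r < 1)
    (h : ∀ N : ℕ, ‖x‖ ≤ C * r ^ N) : x = 0 := by
  have h0 : Filter.Tendsto (fun N : ℕ => C * r ^ N) Filter.atTop (nhds 0) := by
    simpa using (tendsto_pow_atTop_nhds_zero_of_norm_lt_one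
      (x := r) (by rwa [Real.norm_eq_abs, abs_of_nonneg hr0])).const_mul C
  have hle : ‖x‖ ≤ 0 := ge_of_tendsto h0 (Filter.Eventually.of_forall h)
  exact norm_le_zero_iff.mp hle


/-! ### The analytic Taylor shift `f(X) ↦ f(X + a)` -/

noncomputable def shiftS (a : K) (f : PowerSeries K) : PowerSeries K :=
  PowerSeries.mk fun m => ∑' n : ℕ, coeff (m + n) f * ((m + n).choose m : K) * a ^ n

theorem coeff_shiftS (a : K) (f : PowerSeries K) (m : ℕ) :
    coeff m (shiftS a f) = ∑' n : ℕ, coeff (m + n) f * ((m + n).choose m : K) * a ^ n :=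
  coeff_mk _ _

theorem norm_shift_term_le {f : PowerSeries K} (hf : Bnd f) (a : K) (m n : ℕ) :
    ‖coeff (m + n) f * ((m + n).choose m : K) * a ^ n‖ ≤ ‖a‖ ^ n := by
  rw [norm_mul, norm_mul, norm_pow]
  calc ‖coeff (m + n) f‖ * ‖((m + n).choose m : K)‖ * ‖a‖ ^ n
      ≤ 1 * 1 * ‖a‖ ^ n := by
        gcongr
        · exact hf _
        · exact IsUltrametricDist.norm_natCast_le_one K _
    _ = ‖a‖ ^ n := by ring

theorem summable_shiftS {f : PowerSeries K} (hf : Bnd f) {a : K} (ha : ‖a‖ < 1) (m : ℕ) :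
    Summable fun n : ℕ => coeff (m + n) f * ((m + n).choose m : K) * a ^ n :=
  Summable.of_norm_bounded (summable_geometric_of_lt_one (norm_nonneg a) ha)
    (norm_shift_term_le hf a m)

theorem shiftS_add {f g : PowerSeries K} (hf : Bnd f) (hg : Bnd g) {a : K} (ha : ‖a‖ < 1) :
    shiftS a (f + g) = shiftS a f + shiftS a g := by
  ext m
  rw [map_add, coeff_shiftS, coeff_shiftS, coeff_shiftS,
    ← Summable.tsum_add (summable_shiftS hf ha m) (summable_shiftS hg ha m)]
  congr 1; funext n
  rw [map_add]; ring

/-- Main coefficient estimate: if the first `N` coefficients of `f` vanish, the `m`-th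
coefficient of `shiftS a f` has norm at most `‖a‖ ^ (N - m)`. -/
theorem norm_coeff_shiftS_le {f : PowerSeries K} (hf : Bnd f) {a : K} (ha : ‖a‖ < 1)
    {N : ℕ} (hz : ∀ j < N, coeff j f = 0) (m : ℕ) :
    ‖coeff m (shiftS a f)‖ ≤ ‖a‖ ^ (N - m) := by
  rw [coeff_shiftS]
  refine norm_tsum_le (summable_shiftS hf ha m) (by positivity) fun n => ?_
  rcases lt_or_ge (m + n) N with h | h
  · rw [hz _ h]; simpa using by positivity
  · exact (norm_shift_term_le hf a m n).trans
      (pow_le_pow_of_le_one (norm_nonneg a) ha.le (by omega))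

theorem Bnd.shiftS' {f : PowerSeries K} (hf : Bnd f) {a : K} (ha : ‖a‖ < 1) :
    Bnd (shiftS a f) := fun m => by
  simpa using norm_coeff_shiftS_le hf ha (N := 0) (by omega) m

/-- On polynomials, `shiftS` is the Taylor shift. -/
theorem shiftS_coe (a : K) (P : Polynomial K) :
    shiftS a (P : PowerSeries K) = ((Polynomial.taylor a P : Polynomial K) : PowerSeries K) := by
  ext m
  rw [coeff_shiftS, Polynomial.coeff_coe, Polynomial.taylor_coeff,
    Polynomial.eval_eq_sum_range' (Nat.lt_succ_of_le ((Polynomial.natDegree_hasseDeriv_le P m).trans (Nat.sub_le _ _)))]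
  rw [tsum_eq_sum (s := Finset.range (P.natDegree + 1)) ?side]
  · apply Finset.sum_congr rfl
    intro n _
    rw [Polynomial.hasseDeriv_coeff, Polynomial.coeff_coe]
    push_cast
    rw [add_comm n m]
    ring
  · intro n hn
    simp only [Finset.mem_range, not_lt] at hn
    rw [Polynomial.coeff_coe, Polynomial.coeff_eq_zero_of_natDegree_lt (by omega)]
    ring


/-! ### Truncation helpers -/

theorem coeff_coeTrunc (f : PowerSeries K) (N j : ℕ) :
    coeff j ((trunc N f : Polynomial K) : PowerSeries K)
      = if j < N then coeff j f else 0 := by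
  rw [Polynomial.coeff_coe, coeff_trunc]

theorem Bnd.coeTrunc {f : PowerSeries K} (hf : Bnd f) (N : ℕ) :
    Bnd ((trunc N f : Polynomial K) : PowerSeries K) := fun j => by
  rw [coeff_coeTrunc]; split
  · exact hf j
  · simp

theorem Bnd.tail {f : PowerSeries K} (hf : Bnd f) (N : ℕ) :
    Bnd (f - ((trunc N f : Polynomial K) : PowerSeries K)) :=
  hf.sub (hf.coeTrunc N)

theorem coeff_tail_eq_zero (f : PowerSeries K) {N j : ℕ} (hj : j < N) :
    coeff j (f - ((trunc N f : Polynomial K) : PowerSeries K)) = 0 := by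
  rw [map_sub, coeff_coeTrunc, if_pos hj, sub_self]

/-- ultrametric bound on a product coefficient, one factor small up to degree `m`. -/
theorem norm_coeff_mul_le {x y : PowerSeries K} {c : ℝ} (hc : 0 ≤ c) (m : ℕ)
    (hx : ∀ i ≤ m, ‖coeff i x‖ ≤ c) (hy : Bnd y) : ‖coeff m (x * y)‖ ≤ c := by
  rw [PowerSeries.coeff_mul]
  refine IsUltrametricDist.norm_sum_le_of_forall_le_of_nonneg hc fun q hq => ?_
  rw [HasAntidiagonal.mem_antidiagonal] at hq
  rw [norm_mul]
  calc ‖coeff q.1 x‖ * ‖coeff q.2 y‖ ≤ c * 1 := by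
        gcongr
        · exact hx _ (by omega)
        · exact hy _
    _ = c := mul_one c

theorem norm_sub_le_max' (x y : K) : ‖x - y‖ ≤ max ‖x‖ ‖y‖ := by
  rw [sub_eq_add_neg]
  simpa using IsUltrametricDist.norm_add_le_max x (-y)

/-- Taylor-shift commutes with polynomial derivative (through the power-series coercion). -/
theorem taylor_derivative (a : K) (P : Polynomial K) :
    Polynomial.derivative (Polynomial.taylor a P) = Polynomial.taylor a (Polynomial.derivative P) := by
  rw [Polynomial.taylor_apply, Polynomial.taylor_apply, Polynomial.derivative_comp]
  simp

/-! ### Multiplicativity of `shiftS` on bounded series -/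

theorem shiftS_mul {f g : PowerSeries K} (hf : Bnd f) (hg : Bnd g) {a : K} (ha : ‖a‖ < 1) :
    shiftS a (f * g) = shiftS a f * shiftS a g := by
  ext m
  rw [← sub_eq_zero]
  refine eq_zero_of_forall_norm_le_pow (C := 1) (norm_nonneg a) ha fun N => ?_
  rw [one_mul]
  set L := m + N with hL
  set P : Polynomial K := trunc L f with hP
  set Q : Polynomial K := trunc L g with hQ
  set tF : PowerSeries K := f - (P : PowerSeries K) with htF
  set tG : PowerSeries K := g - (Q : PowerSeries K) with htG
  set E : PowerSeries K := f * g - (P : PowerSeries K) * (Q : PowerSeries K) with hE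
  have hBP : Bnd (P : PowerSeries K) := hf.coeTrunc L
  have hBQ : Bnd (Q : PowerSeries K) := hg.coeTrunc L
  have hBtF : Bnd tF := hf.tail L
  have hBtG : Bnd tG := hg.tail L
  have hBE : Bnd E := (hf.mul hg).sub (hBP.mul hBQ)
  have hEz : ∀ j < L, coeff j E = 0 := by
    intro j hj
    rw [hE, map_sub, PowerSeries.coeff_mul, PowerSeries.coeff_mul, sub_eq_zero]
    refine Finset.sum_congr rfl fun q hq => ?_
    rw [HasAntidiagonal.mem_antidiagonal] at hq
    rw [coeff_coeTrunc, coeff_coeTrunc, if_pos (by omega), if_pos (by omega)]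
  -- main algebraic identity on polynomial parts
  have hPQ : shiftS a ((P : PowerSeries K) * (Q : PowerSeries K))
      = shiftS a (P : PowerSeries K) * shiftS a (Q : PowerSeries K) := by
    rw [← Polynomial.coe_mul, shiftS_coe, shiftS_coe, shiftS_coe, Polynomial.taylor_mul,
      Polynomial.coe_mul]
  -- decompose both sides
  have hdec1 : shiftS a (f * g) = shiftS a ((P : PowerSeries K) * (Q : PowerSeries K))
      + shiftS a E := by
    rw [← shiftS_add (hBP.mul hBQ) hBE ha]
    congr 1
    rw [hE]; ring
  have hdecf : shiftS a f = shiftS a (P : PowerSeries K) + shiftS a tF := by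
    rw [← shiftS_add hBP hBtF ha]
    congr 1; rw [htF]; ring
  have hdecg : shiftS a g = shiftS a (Q : PowerSeries K) + shiftS a tG := by
    rw [← shiftS_add hBQ hBtG ha]
    congr 1; rw [htG]; ring
  -- small-coefficient bounds
  have hsmall : ∀ {t : PowerSeries K}, Bnd t → (∀ j < L, coeff j t = 0) →
      ∀ i ≤ m, ‖coeff i (shiftS a t)‖ ≤ ‖a‖ ^ N := by
    intro t hBt hzt i hi
    refine (norm_coeff_shiftS_le hBt ha hzt i).trans ?_
    exact pow_le_pow_of_le_one (norm_nonneg a) ha.le (by omega)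
  have h1 : ‖coeff m (shiftS a E)‖ ≤ ‖a‖ ^ N :=
    hsmall hBE hEz m le_rfl
  have h2 : ‖coeff m (shiftS a (P : PowerSeries K) * shiftS a tG)‖ ≤ ‖a‖ ^ N := by
    rw [mul_comm]
    refine norm_coeff_mul_le (by positivity) m ?_ (hBP.shiftS' ha)
    exact hsmall hBtG (fun j hj => coeff_tail_eq_zero g hj)
  have h3 : ‖coeff m (shiftS a tF * shiftS a (Q : PowerSeries K))‖ ≤ ‖a‖ ^ N :=
    norm_coeff_mul_le (by positivity) m
      (hsmall hBtF (fun j hj => coeff_tail_eq_zero f hj)) (hBQ.shiftS' ha)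
  have h4 : ‖coeff m (shiftS a tF * shiftS a tG)‖ ≤ ‖a‖ ^ N :=
    norm_coeff_mul_le (by positivity) m
      (hsmall hBtF (fun j hj => coeff_tail_eq_zero f hj)) (hBtG.shiftS' ha)
  -- assemble
  have keyS : shiftS a (f * g) - shiftS a f * shiftS a g
      = shiftS a E - (shiftS a (P : PowerSeries K) * shiftS a tG
        + shiftS a tF * shiftS a (Q : PowerSeries K) + shiftS a tF * shiftS a tG) := by
    rw [hdec1, hdecf, hdecg, hPQ]; ring
  have key : coeff m (shiftS a (f * g)) - coeff m (shiftS a f * shiftS a g)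
      = coeff m (shiftS a E)
        - (coeff m (shiftS a (P : PowerSeries K) * shiftS a tG)
          + coeff m (shiftS a tF * shiftS a (Q : PowerSeries K))
          + coeff m (shiftS a tF * shiftS a tG)) := by
    rw [← map_sub, keyS, map_sub, map_add, map_add]
  rw [key]
  refine (norm_sub_le_max' _ _).trans (max_le h1 ?_)
  refine (IsUltrametricDist.norm_add_le_max _ _).trans
    (max_le ((IsUltrametricDist.norm_add_le_max _ _).trans (max_le h2 h3)) h4)


/-! ### `shiftS` commutes with `d⁄dX` -/

theorem derivative_shiftS {f : PowerSeries K} (hf : Bnd f) {a : K} (ha : ‖a‖ < 1) :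
    d⁄dX K (shiftS a f) = shiftS a (d⁄dX K f) := by
  ext m
  rw [← sub_eq_zero]
  refine eq_zero_of_forall_norm_le_pow (C := 1) (norm_nonneg a) ha fun N => ?_
  rw [one_mul]
  set L := m + N + 1 with hL
  set P : Polynomial K := trunc L f with hP
  set tF : PowerSeries K := f - (P : PowerSeries K) with htF
  have hBP : Bnd (P : PowerSeries K) := hf.coeTrunc L
  have hBtF : Bnd tF := hf.tail L
  -- polynomial part commutes exactly
  have hpoly : d⁄dX K (shiftS a (P : PowerSeries K)) = shiftS a (d⁄dX K (P : PowerSeries K)) := by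
    rw [shiftS_coe, PowerSeries.derivative_coe, taylor_derivative, PowerSeries.derivative_coe,
      shiftS_coe]
  have hdecf : shiftS a f = shiftS a (P : PowerSeries K) + shiftS a tF := by
    rw [← shiftS_add hBP hBtF ha]; congr 1; rw [htF]; ring
  have hdecd : d⁄dX K f = d⁄dX K (P : PowerSeries K) + d⁄dX K tF := by
    rw [← map_add]; congr 1; rw [htF]; ring
  have hdecd' : shiftS a (d⁄dX K f)
      = shiftS a (d⁄dX K (P : PowerSeries K)) + shiftS a (d⁄dX K tF) := by
    rw [hdecd, shiftS_add hBP.deriv hBtF.deriv ha]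
  have keyS : coeff m (d⁄dX K (shiftS a f)) - coeff m (shiftS a (d⁄dX K f))
      = coeff m (d⁄dX K (shiftS a tF)) - coeff m (shiftS a (d⁄dX K tF)) := by
    rw [hdecf, hdecd', map_add, map_add, map_add, hpoly]; ring
  rw [keyS]
  have h1 : ‖coeff m (d⁄dX K (shiftS a tF))‖ ≤ ‖a‖ ^ N := by
    rw [coeff_derivative, norm_mul]
    have hc : ‖coeff (m + 1) (shiftS a tF)‖ ≤ ‖a‖ ^ N := by
      refine (norm_coeff_shiftS_le hBtF ha
        (fun j hj => coeff_tail_eq_zero f hj) (m + 1)).trans ?_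
      exact pow_le_pow_of_le_one (norm_nonneg a) ha.le (by omega)
    have hn : ‖((m : K) + 1)‖ ≤ 1 := by
      rw [show ((m : K) + 1) = ((m + 1 : ℕ) : K) by push_cast; ring]
      exact IsUltrametricDist.norm_natCast_le_one K _
    calc ‖coeff (m + 1) (shiftS a tF)‖ * ‖((m : K) + 1)‖ ≤ ‖a‖ ^ N * 1 := by gcongr
      _ = ‖a‖ ^ N := mul_one _
  have h2 : ‖coeff m (shiftS a (d⁄dX K tF))‖ ≤ ‖a‖ ^ N := by
    have hz : ∀ j < L - 1, coeff j (d⁄dX K tF) = 0 := by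
      intro j hj
      rw [coeff_derivative, coeff_tail_eq_zero f (by omega), zero_mul]
    refine (norm_coeff_shiftS_le hBtF.deriv ha hz m).trans ?_
    exact pow_le_pow_of_le_one (norm_nonneg a) ha.le (by omega)
  exact (norm_sub_le_max' _ _).trans (max_le h1 h2)


/-! ### `twistSubst` via `rescale` and `shiftS` -/

theorem twistSubst_eq (ξ : K) (f : PowerSeries K) :
    twistSubst ξ f = rescale ξ (shiftS (ξ - 1) f) := by
  ext m
  rw [twistSubst, coeff_mk, coeff_rescale, coeff_shiftS, ← tsum_mul_left]
  congr 1; funext n; ring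

theorem shiftS_neg (a : K) (g : PowerSeries K) : shiftS a (-g) = -shiftS a g := by
  ext m
  rw [map_neg, coeff_shiftS, coeff_shiftS, ← tsum_neg]
  congr 1; funext n; rw [map_neg]; ring

theorem twistSubst_add {f g : PowerSeries K} (hf : Bnd f) (hg : Bnd g) {ξ : K}
    (hξ : ‖ξ - 1‖ < 1) : twistSubst ξ (f + g) = twistSubst ξ f + twistSubst ξ g := by
  rw [twistSubst_eq, shiftS_add hf hg hξ, map_add, twistSubst_eq, twistSubst_eq]

theorem twistSubst_sub {f g : PowerSeries K} (hf : Bnd f) (hg : Bnd g) {ξ : K}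
    (hξ : ‖ξ - 1‖ < 1) : twistSubst ξ (f - g) = twistSubst ξ f - twistSubst ξ g := by
  rw [sub_eq_add_neg, sub_eq_add_neg, twistSubst_add hf hg.neg hξ]
  congr 1
  rw [twistSubst_eq, twistSubst_eq, shiftS_neg, map_neg]

theorem twistSubst_mul {f g : PowerSeries K} (hf : Bnd f) (hg : Bnd g) {ξ : K}
    (hξ : ‖ξ - 1‖ < 1) : twistSubst ξ (f * g) = twistSubst ξ f * twistSubst ξ g := by
  rw [twistSubst_eq, shiftS_mul hf hg hξ, map_mul, twistSubst_eq, twistSubst_eq]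

theorem twistSubst_pow {f : PowerSeries K} (hf : Bnd f) {ξ : K} (hξ : ‖ξ - 1‖ < 1) (k : ℕ) :
    twistSubst ξ (f ^ k) = twistSubst ξ f ^ k := by
  induction k with
  | zero =>
    simp only [pow_zero]
    rw [show (1 : PowerSeries K) = ((1 : Polynomial K) : PowerSeries K) by push_cast; rfl,
      twistSubst_eq, shiftS_coe]
    simp [Polynomial.taylor_one]
  | succ k ih =>
    rw [pow_succ, pow_succ, twistSubst_mul (hf.pow k) hf hξ, ih]

theorem twistSubst_one (ξ : K) : twistSubst ξ (1 : PowerSeries K) = 1 := by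
  rw [show (1 : PowerSeries K) = ((1 : Polynomial K) : PowerSeries K) by push_cast; rfl,
    twistSubst_eq, shiftS_coe]
  simp [Polynomial.taylor_one]

theorem twistSubst_C (ξ c : K) : twistSubst ξ (C c) = C c := by
  rw [show (C c : PowerSeries K) = ((Polynomial.C c : Polynomial K) : PowerSeries K) by
      rw [Polynomial.coe_C],
    twistSubst_eq, shiftS_coe, Polynomial.taylor_C, Polynomial.coe_C]
  ext m
  rw [coeff_rescale, coeff_C]
  split <;> simp_all

theorem twistSubst_one_add_X (ξ : K) :
    twistSubst ξ (1 + X : PowerSeries K) = C ξ * (1 + X) := by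
  have hc : (1 + X : PowerSeries K) = ((1 + Polynomial.X : Polynomial K) : PowerSeries K) := by
    push_cast; rfl
  rw [hc, twistSubst_eq, shiftS_coe]
  have ht : Polynomial.taylor (ξ - 1) (1 + Polynomial.X : Polynomial K)
      = Polynomial.C ξ + Polynomial.X := by
    rw [Polynomial.taylor_apply]
    simp only [Polynomial.add_comp, Polynomial.one_comp, Polynomial.X_comp]
    calc (1 : Polynomial K) + (Polynomial.X + Polynomial.C (ξ - 1))
        = (Polynomial.C 1 + Polynomial.C (ξ - 1)) + Polynomial.X := by
          rw [Polynomial.C_1]; ring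
      _ = Polynomial.C ξ + Polynomial.X := by rw [← map_add]; congr 1; ring
  rw [ht]
  ext m
  rw [coeff_rescale]
  rcases m with _ | _ | m <;>
    simp [Polynomial.coe_add, Polynomial.coe_C, Polynomial.coe_X, mul_add,
      PowerSeries.coeff_C_mul, coeff_C, coeff_X, coeff_one, map_add, pow_succ]

theorem derivative_rescale (c : K) (h : PowerSeries K) :
    d⁄dX K (rescale c h) = C c * rescale c (d⁄dX K h) := by
  ext m
  rw [coeff_derivative, coeff_rescale, PowerSeries.coeff_C_mul, coeff_rescale, coeff_derivative,
    pow_succ]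
  ring

theorem twistSubst_D {f : PowerSeries K} (hf : Bnd f) {ξ : K} (hξ : ‖ξ - 1‖ < 1) :
    twistSubst ξ ((1 + X) * d⁄dX K f) = (1 + X) * d⁄dX K (twistSubst ξ f) := by
  rw [twistSubst_mul Bnd_onePlusX hf.deriv hξ, twistSubst_one_add_X]
  rw [show twistSubst ξ (d⁄dX K f) = rescale ξ (shiftS (ξ - 1) (d⁄dX K f)) from twistSubst_eq _ _,
    ← derivative_shiftS hf hξ]
  rw [twistSubst_eq, derivative_rescale]
  ring

theorem constantCoeff_twistSubst_ne_zero {f : PowerSeries K} (hf : Bnd f)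
    (h0 : ‖constantCoeff f‖ = 1) {ξ : K} (hξ : ‖ξ - 1‖ < 1) :
    constantCoeff (twistSubst ξ f) ≠ 0 := by
  set a := ξ - 1 with ha
  set F : ℕ → K := fun n => coeff (0 + n) f * (((0 + n).choose 0 : ℕ) : K) * a ^ n with hF
  have hsum : Summable F := summable_shiftS hf hξ 0
  have hcc : constantCoeff (twistSubst ξ f) = ∑' n, F n := by
    rw [twistSubst_eq, ← coeff_zero_eq_constantCoeff_apply, coeff_rescale, coeff_shiftS,
      pow_zero, one_mul]
  rw [hcc, Summable.tsum_eq_zero_add hsum]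
  intro hcontra
  have htail : ‖∑' n : ℕ, F (n + 1)‖ ≤ ‖a‖ := by
    refine norm_tsum_le (f := fun n => F (n + 1)) ((summable_nat_add_iff (f := F) 1).mpr hsum) (norm_nonneg a) fun n => ?_
    refine (norm_shift_term_le hf a 0 (n + 1)).trans ?_
    calc ‖a‖ ^ (n + 1) ≤ ‖a‖ ^ 1 :=
          pow_le_pow_of_le_one (norm_nonneg a) hξ.le (by omega)
      _ = ‖a‖ := pow_one _
  have hF0 : ‖F 0‖ = 1 := by
    simp only [hF, Nat.choose_zero_right, Nat.cast_one, mul_one, pow_zero, Nat.add_zero]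
    simpa [coeff_zero_eq_constantCoeff] using h0
  have : F 0 = -∑' n : ℕ, F (n + 1) := eq_neg_of_add_eq_zero_left hcontra
  rw [this, norm_neg] at hF0
  exact absurd (hF0.symm.le.trans htail) (not_le.mpr hξ)


/-! ### The formal substitution `pSubst` -/

section PSubst

variable (p : ℕ)

theorem coeff_pSubst (f : PowerSeries K) (m : ℕ) :
    coeff m (pSubst p f)
      = ∑ n ∈ range (m + 1),
          coeff n f * coeff m (((1 + X : PowerSeries K) ^ p - 1) ^ n) := by
  rw [pSubst, coeff_mk]

theorem Bnd_u : Bnd ((1 + X : PowerSeries K) ^ p - 1) := (Bnd_onePlusX.pow p).sub Bnd.one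

theorem coeff_u_pow_eq_zero {n m : ℕ} (h : m < n) :
    coeff m ((((1 + X : PowerSeries K) ^ p - 1)) ^ n) = 0 := by
  have hX : (X : PowerSeries K) ∣ ((1 + X : PowerSeries K) ^ p - 1) := by
    rw [PowerSeries.X_dvd_iff]; simp
  obtain ⟨g, hg⟩ := pow_dvd_pow_of_dvd hX n
  rw [hg, PowerSeries.coeff_mul]
  refine Finset.sum_eq_zero fun q hq => ?_
  rw [HasAntidiagonal.mem_antidiagonal] at hq
  rw [coeff_X_pow, if_neg (by omega), zero_mul]

theorem coeff_pSubst_ext (f : PowerSeries K) {m N : ℕ} (hm : m < N) :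
    coeff m (pSubst p f)
      = ∑ n ∈ range N, coeff n f * coeff m (((1 + X : PowerSeries K) ^ p - 1) ^ n) := by
  rw [coeff_pSubst]
  refine Finset.sum_subset (Finset.range_subset_range.mpr (by omega)) fun x _ hx => ?_
  rw [Finset.mem_range, not_lt] at hx
  rw [coeff_u_pow_eq_zero p (by omega), mul_zero]

theorem coeff_aeval (P : Polynomial K) (m : ℕ) :
    coeff m (Polynomial.aeval ((1 + X : PowerSeries K) ^ p - 1) P)
      = ∑ i ∈ range (m + 1), P.coeff i * coeff m (((1 + X : PowerSeries K) ^ p - 1) ^ i) := by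
  rw [Polynomial.aeval_def, Polynomial.eval₂_eq_sum_range, map_sum]
  have hterm : ∀ i, coeff m
      (algebraMap K (PowerSeries K) (P.coeff i) * ((1 + X : PowerSeries K) ^ p - 1) ^ i)
      = P.coeff i * coeff m (((1 + X : PowerSeries K) ^ p - 1) ^ i) := fun i => by
    rw [PowerSeries.algebraMap_apply]
    simp [PowerSeries.coeff_C_mul]
  simp only [hterm]
  set T : ℕ → K := fun i => P.coeff i * coeff m (((1 + X : PowerSeries K) ^ p - 1) ^ i) with hT
  set M := max (P.natDegree + 1) (m + 1) with hM
  have e1 : ∑ x ∈ range (P.natDegree + 1), T x = ∑ x ∈ range M, T x := by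
    refine Finset.sum_subset (Finset.range_subset_range.mpr (le_max_left _ _)) fun x _ hx => ?_
    rw [Finset.mem_range, not_lt] at hx
    simp only [hT]
    rw [Polynomial.coeff_eq_zero_of_natDegree_lt (by omega), zero_mul]
  have e2 : ∑ x ∈ range (m + 1), T x = ∑ x ∈ range M, T x := by
    refine Finset.sum_subset (Finset.range_subset_range.mpr (le_max_right _ _)) fun x _ hx => ?_
    rw [Finset.mem_range, not_lt] at hx
    simp only [hT]
    rw [coeff_u_pow_eq_zero p (by omega), mul_zero]
  rw [e1, e2]

theorem coeff_pSubst_aeval (f : PowerSeries K) {m N : ℕ} (hm : m < N) :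
    coeff m (pSubst p f)
      = coeff m (Polynomial.aeval ((1 + X : PowerSeries K) ^ p - 1) (trunc N f)) := by
  rw [coeff_aeval, coeff_pSubst]
  refine Finset.sum_congr rfl fun i hi => ?_
  rw [Finset.mem_range] at hi
  rw [coeff_trunc, if_pos (by omega)]

theorem pSubst_add (f g : PowerSeries K) : pSubst p (f + g) = pSubst p f + pSubst p g := by
  ext m
  rw [map_add, coeff_pSubst, coeff_pSubst, coeff_pSubst, ← Finset.sum_add_distrib]
  refine Finset.sum_congr rfl fun i _ => ?_
  rw [map_add]; ring

theorem pSubst_sub (f g : PowerSeries K) : pSubst p (f - g) = pSubst p f - pSubst p g := by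
  ext m
  rw [map_sub, coeff_pSubst, coeff_pSubst, coeff_pSubst, ← Finset.sum_sub_distrib]
  refine Finset.sum_congr rfl fun i _ => ?_
  rw [map_sub]; ring

theorem pSubst_one : pSubst p (1 : PowerSeries K) = 1 := by
  ext m
  rw [coeff_pSubst]
  rw [Finset.sum_eq_single 0]
  · simp
  · intro b _ hb
    rw [coeff_one, if_neg hb, zero_mul]
  · intro h
    simp at h

theorem pSubst_X : pSubst p (X : PowerSeries K) = (1 + X : PowerSeries K) ^ p - 1 := by
  ext m
  rcases Nat.eq_zero_or_pos m with hm | hm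
  · subst hm
    rw [coeff_pSubst]
    simp
  · rw [coeff_pSubst, Finset.sum_eq_single 1]
    · simp
    · intro b _ hb
      rw [coeff_X, if_neg hb, zero_mul]
    · intro h
      rw [Finset.mem_range] at h
      omega

theorem coeff_mul_congr {x x' y y' : PowerSeries K} (m : ℕ)
    (hx : ∀ i ≤ m, coeff i x = coeff i x') (hy : ∀ i ≤ m, coeff i y = coeff i y') :
    coeff m (x * y) = coeff m (x' * y') := by
  rw [PowerSeries.coeff_mul, PowerSeries.coeff_mul]
  refine Finset.sum_congr rfl fun q hq => ?_
  rw [HasAntidiagonal.mem_antidiagonal] at hq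
  rw [hx _ (by omega), hy _ (by omega)]

theorem pSubst_mul (f g : PowerSeries K) : pSubst p (f * g) = pSubst p f * pSubst p g := by
  ext m
  set N := m + 1 with hN
  set uu : PowerSeries K := (1 + X : PowerSeries K) ^ p - 1 with huu
  rw [coeff_pSubst_aeval p (f * g) (show m < N by omega)]
  have hR : coeff m (pSubst p f * pSubst p g)
      = coeff m ((Polynomial.aeval uu (trunc N f)) * (Polynomial.aeval uu (trunc N g))) :=
    coeff_mul_congr m (fun i hi => coeff_pSubst_aeval p f (by omega))
      (fun i hi => coeff_pSubst_aeval p g (by omega))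
  rw [hR, ← map_mul]
  -- the two polynomials agree in degrees ≤ m
  rw [coeff_aeval, coeff_aeval]
  refine Finset.sum_congr rfl fun i hi => ?_
  rw [Finset.mem_range] at hi
  congr 1
  rw [coeff_trunc, if_pos (by omega), Polynomial.coeff_mul, PowerSeries.coeff_mul]
  refine Finset.sum_congr rfl fun q hq => ?_
  rw [HasAntidiagonal.mem_antidiagonal] at hq
  rw [coeff_trunc, coeff_trunc, if_pos (by omega), if_pos (by omega)]

theorem Bnd_pSubst {f : PowerSeries K} (hf : Bnd f) : Bnd (pSubst p f) := fun m => by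
  rw [coeff_pSubst]
  refine IsUltrametricDist.norm_sum_le_of_forall_le_of_nonneg zero_le_one fun i _ => ?_
  rw [norm_mul]
  exact mul_le_one₀ (hf _) (norm_nonneg _) ((Bnd_u p).pow i _)

theorem derivative_pSubst (h : PowerSeries K) :
    d⁄dX K (pSubst p h)
      = pSubst p (d⁄dX K h) * d⁄dX K ((1 + X : PowerSeries K) ^ p - 1) := by
  set uu : PowerSeries K := (1 + X : PowerSeries K) ^ p - 1 with huu
  ext m
  have hRHS : coeff m (pSubst p (d⁄dX K h) * d⁄dX K uu)
      = ∑ n ∈ range (m + 1), coeff n (d⁄dX K h) * coeff m (uu ^ n * d⁄dX K uu) := by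
    rw [PowerSeries.coeff_mul]
    have hq : ∀ q ∈ antidiagonal m,
        coeff q.1 (pSubst p (d⁄dX K h)) * coeff q.2 (d⁄dX K uu)
        = ∑ n ∈ range (m + 1),
            coeff n (d⁄dX K h) * (coeff q.1 (uu ^ n) * coeff q.2 (d⁄dX K uu)) := by
      intro q hq
      rw [HasAntidiagonal.mem_antidiagonal] at hq
      rw [coeff_pSubst_ext p _ (show q.1 < m + 1 by omega), Finset.sum_mul]
      exact Finset.sum_congr rfl fun n _ => by ring
    rw [Finset.sum_congr rfl hq, Finset.sum_comm]
    refine Finset.sum_congr rfl fun n _ => ?_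
    rw [PowerSeries.coeff_mul, ← Finset.mul_sum]
  have hpow : ∀ n : ℕ, coeff (m + 1) (uu ^ (n + 1)) * ((m : K) + 1)
      = ((n : K) + 1) * coeff m (uu ^ n * d⁄dX K uu) := by
    intro n
    have hd : d⁄dX K (uu ^ (n + 1)) = (n + 1) • (uu ^ n • d⁄dX K uu) := by
      simpa using Derivation.leibniz_pow (d⁄dX K) (a := uu) (n + 1)
    calc coeff (m + 1) (uu ^ (n + 1)) * ((m : K) + 1)
        = coeff m (d⁄dX K (uu ^ (n + 1))) := (coeff_derivative _ _).symm
      _ = coeff m ((n + 1) • (uu ^ n • d⁄dX K uu)) := by rw [hd]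
      _ = ((n : K) + 1) * coeff m (uu ^ n * d⁄dX K uu) := by
          rw [map_nsmul, nsmul_eq_mul, smul_eq_mul]
          push_cast
          ring
  rw [hRHS, coeff_derivative, coeff_pSubst_ext p h (show m + 1 < m + 2 by omega),
    Finset.sum_mul, Finset.sum_range_succ']
  have h00 : coeff 0 h * coeff (m + 1) (uu ^ 0) * ((m : K) + 1) = 0 := by
    rw [pow_zero, coeff_one, if_neg (by omega)]
    ring
  rw [h00, add_zero]
  refine Finset.sum_congr rfl fun n _ => ?_
  rw [coeff_derivative]
  calc coeff (n + 1) h * coeff (m + 1) (uu ^ (n + 1)) * ((m : K) + 1)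
      = coeff (n + 1) h * (coeff (m + 1) (uu ^ (n + 1)) * ((m : K) + 1)) := by ring
    _ = coeff (n + 1) h * (((n : K) + 1) * coeff m (uu ^ n * d⁄dX K uu)) := by rw [hpow n]
    _ = coeff (n + 1) h * ((n : K) + 1) * coeff m (uu ^ n * d⁄dX K uu) := by ring

theorem twistSubst_zero (ξ : K) : twistSubst ξ (0 : PowerSeries K) = 0 := by
  rw [twistSubst_eq]
  have : shiftS (ξ - 1) (0 : PowerSeries K) = 0 := by
    ext m
    rw [coeff_shiftS]
    simp
  rw [this, map_zero]

theorem twistSubst_sum {ι : Type*} (s : Finset ι) (F : ι → PowerSeries K)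
    (hF : ∀ i ∈ s, Bnd (F i)) {ξ : K} (hξ : ‖ξ - 1‖ < 1) :
    twistSubst ξ (∑ i ∈ s, F i) = ∑ i ∈ s, twistSubst ξ (F i) := by
  induction s using Finset.cons_induction with
  | empty => simpa using twistSubst_zero ξ
  | cons a s' hnotmem ih =>
    rw [Finset.sum_cons, Finset.sum_cons,
      twistSubst_add (hF a (Finset.mem_cons_self a s'))
        (Bnd.sum fun i hi => hF i (Finset.mem_cons_of_mem hi)) hξ,
      ih fun i hi => hF i (Finset.mem_cons_of_mem hi)]

theorem twistSubst_pSubst {h : PowerSeries K} (hh : Bnd h) {ξ : K} (hξ : ‖ξ - 1‖ < 1)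
    (hξp : ξ ^ p = 1) : twistSubst ξ (pSubst p h) = pSubst p h := by
  have hu : twistSubst ξ ((1 + X : PowerSeries K) ^ p - 1)
      = (1 + X : PowerSeries K) ^ p - 1 := by
    rw [twistSubst_sub (Bnd_onePlusX.pow p) Bnd.one hξ, twistSubst_one,
      twistSubst_pow Bnd_onePlusX hξ p, twistSubst_one_add_X, mul_pow, ← map_pow, hξp, map_one,
      one_mul]
  ext m
  rw [← sub_eq_zero]
  refine eq_zero_of_forall_norm_le_pow (C := ‖ξ‖ ^ m) (norm_nonneg (ξ - 1)) hξ fun N => ?_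
  set L := m + N + 1 with hL
  set SN : PowerSeries K :=
    ∑ n ∈ range L, C (coeff n h) * ((1 + X : PowerSeries K) ^ p - 1) ^ n with hSN
  have hBSN : Bnd SN := Bnd.sum fun i _ => (Bnd.C (hh i)).mul ((Bnd_u p).pow i)
  have hcoeffSN : ∀ j < L, coeff j SN = coeff j (pSubst p h) := by
    intro j hj
    rw [hSN, map_sum, coeff_pSubst_ext p h (show j < L by omega)]
    refine Finset.sum_congr rfl fun i _ => ?_
    rw [PowerSeries.coeff_C_mul]
  set tN : PowerSeries K := pSubst p h - SN with htN
  have hBt : Bnd tN := (Bnd_pSubst p hh).sub hBSN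
  have htz : ∀ j < L, coeff j tN = 0 := fun j hj => by
    rw [htN, map_sub, hcoeffSN j hj, sub_self]
  have hTS : twistSubst ξ SN = SN := by
    rw [hSN, twistSubst_sum _ _ (fun i _ => (Bnd.C (hh i)).mul ((Bnd_u p).pow i)) hξ]
    refine Finset.sum_congr rfl fun i _ => ?_
    rw [twistSubst_mul (Bnd.C (hh i)) ((Bnd_u p).pow i) hξ, twistSubst_C,
      twistSubst_pow (Bnd_u p) hξ i, hu]
  have hdec : twistSubst ξ (pSubst p h) = SN + twistSubst ξ tN := by
    have hps : pSubst p h = SN + tN := by rw [htN]; ring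
    rw [hps, twistSubst_add hBSN hBt hξ, hTS]
  have hkey : coeff m (twistSubst ξ (pSubst p h)) - coeff m (pSubst p h)
      = coeff m (twistSubst ξ tN) := by
    rw [hdec, map_add, ← hcoeffSN m (by omega)]
    ring
  rw [hkey, twistSubst_eq, coeff_rescale, norm_mul, norm_pow]
  have hb : ‖coeff m (shiftS (ξ - 1) tN)‖ ≤ ‖ξ - 1‖ ^ N := by
    refine (norm_coeff_shiftS_le hBt hξ htz m).trans ?_
    exact pow_le_pow_of_le_one (norm_nonneg _) hξ.le (by omega)
  gcongr

end PSubst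



/-! ### Derivative of a finite product -/

theorem derivative_prod {ι : Type*} [DecidableEq ι] (s : Finset ι) (F : ι → PowerSeries K) :
    d⁄dX K (∏ i ∈ s, F i) = ∑ i ∈ s, d⁄dX K (F i) * ∏ j ∈ s.erase i, F j := by
  induction s using Finset.induction_on with
  | empty => simp
  | insert a s' ha ih =>
    rw [Finset.prod_insert ha, Derivation.leibniz, Finset.sum_insert ha, Finset.erase_insert ha]
    have hterm : ∀ i ∈ s', d⁄dX K (F i) * ∏ j ∈ (insert a s').erase i, F j
        = F a * (d⁄dX K (F i) * ∏ j ∈ s'.erase i, F j) := by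
      intro i hi
      have hne : a ≠ i := fun h => ha (h ▸ hi)
      rw [Finset.erase_insert_of_ne hne,
        Finset.prod_insert (fun hmem => ha (Finset.mem_of_mem_erase hmem))]
      ring
    rw [Finset.sum_congr rfl hterm, ← Finset.mul_sum, ← ih, smul_eq_mul, smul_eq_mul]
    ring

end ColemanAux

/-! ### Main theorem -/

open ColemanAux

/-- If `f ∈ 𝒪_F⟦T⟧^×` satisfies Coleman's norm relation `𝒩(f) = σ_F(f)`, i.e.
`∏_{ξ ∈ μ_p} f(ξ(1+T)-1) = (σ_F f)((1+T)^p - 1)`, then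
`g := Df/f - [p]σ_F(Df/f)` (with `D = (1+T)d/dT`) satisfies `𝔗(g) = 0`, i.e.
`∑_{ξ ∈ μ_p} g(ξ(1+T)-1) = 0` (which is `p·[p]𝔗g = 0`). -/
theorem stmt_18 (p : ℕ) (hp : p.Prime) (hodd : Odd p) {K : Type*}
    [NontriviallyNormedField K] [CompleteSpace K] [IsUltrametricDist K] [CharZero K]
    (S : Finset K) (hcard : S.card = p) (hS : ∀ x : K, x ∈ S ↔ x ^ p = 1)
    (hSnorm : ∀ ξ ∈ S, ‖ξ - 1‖ < 1)
    (σ : K →+* K) (hσ : ∀ x, ‖σ x‖ = ‖x‖)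
    (f : PowerSeries K) (hfint : ∀ n, ‖coeff n f‖ ≤ 1)
    (hfunit : ‖constantCoeff f‖ = 1)
    (hNorm : ∏ ξ ∈ S, twistSubst ξ f = pSubst p (PowerSeries.map σ f)) :
    ∑ ξ ∈ S, twistSubst ξ
        (((1 + X) * d⁄dX K f * f⁻¹) -
          pSubst p (PowerSeries.map σ ((1 + X) * d⁄dX K f * f⁻¹))) = 0 := by
  classical
  have hp1 : 1 ≤ p := hp.one_le
  set q : PowerSeries K := (1 + X) * d⁄dX K f * f⁻¹ with hq
  have hc0 : constantCoeff f ≠ 0 := by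
    intro h
    rw [h, norm_zero] at hfunit
    exact one_ne_zero hfunit.symm
  have hBf : Bnd f := hfint
  have hBfi : Bnd f⁻¹ := hBf.inv hfunit
  have hBq : Bnd q := (Bnd_onePlusX.mul hBf.deriv).mul hBfi
  have hinv : f⁻¹ * f = 1 := by rw [mul_comm]; exact PowerSeries.mul_inv_cancel f hc0
  have hqf : q * f = (1 + X) * d⁄dX K f := by rw [hq, mul_assoc, hinv, mul_one]
  have hBσf : Bnd (PowerSeries.map σ f) := hBf.map σ hσ
  have hBσq : Bnd (PowerSeries.map σ q) := hBq.map σ hσ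
  -- step 1: twisted logarithmic derivative
  have hstep : ∀ ξ ∈ S, twistSubst ξ q * twistSubst ξ f
      = (1 + X) * d⁄dX K (twistSubst ξ f) := fun ξ hξ => by
    rw [← twistSubst_mul hBq hBf (hSnorm ξ hξ), hqf, twistSubst_D hBf (hSnorm ξ hξ)]
  set F : PowerSeries K := ∏ ξ ∈ S, twistSubst ξ f with hF
  have hDF : (1 + X) * d⁄dX K F = (∑ ξ ∈ S, twistSubst ξ q) * F := by
    rw [hF, derivative_prod, Finset.mul_sum, Finset.sum_mul]
    refine Finset.sum_congr rfl fun ξ hξ => ?_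
    calc (1 + X) * (d⁄dX K (twistSubst ξ f) * ∏ j ∈ S.erase ξ, twistSubst j f)
        = ((1 + X) * d⁄dX K (twistSubst ξ f)) * ∏ j ∈ S.erase ξ, twistSubst j f := by ring
      _ = (twistSubst ξ q * twistSubst ξ f) * ∏ j ∈ S.erase ξ, twistSubst j f := by
          rw [hstep ξ hξ]
      _ = twistSubst ξ q * (twistSubst ξ f * ∏ j ∈ S.erase ξ, twistSubst j f) := by ring
      _ = twistSubst ξ q * F := by
          rw [hF, ← Finset.mul_prod_erase S (fun j => twistSubst j f) hξ]
  -- step 2: the `pSubst` side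
  have hmapD : d⁄dX K (PowerSeries.map σ f) = PowerSeries.map σ (d⁄dX K f) := by
    ext n
    rw [coeff_derivative, PowerSeries.coeff_map, PowerSeries.coeff_map, coeff_derivative,
      map_mul, show ((n : K) + 1) = ((n + 1 : ℕ) : K) by push_cast; ring, map_natCast]
  have hd1X : d⁄dX K (1 + X : PowerSeries K) = 1 := by
    rw [map_add, derivative_X]
    simp
  have hdu : (1 + X : PowerSeries K) * d⁄dX K ((1 + X : PowerSeries K) ^ p - 1)
      = (p : PowerSeries K) * (1 + X : PowerSeries K) ^ p := by
    rw [map_sub]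
    have hpow := Derivation.leibniz_pow (d⁄dX K) (a := (1 + X : PowerSeries K)) p
    rw [hpow, hd1X]
    have h1 : d⁄dX K (1 : PowerSeries K) = 0 := Derivation.map_one_eq_zero _
    rw [h1, sub_zero, smul_eq_mul, mul_one, nsmul_eq_mul]
    rw [show (1 + X : PowerSeries K) * ((p : PowerSeries K) * (1 + X) ^ (p - 1))
        = (p : PowerSeries K) * ((1 + X) ^ (p - 1) * (1 + X)) by ring, ← pow_succ,
      Nat.sub_add_cancel hp1]
  have hpS1X : pSubst p (1 + X : PowerSeries K) = (1 + X : PowerSeries K) ^ p := by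
    rw [pSubst_add, pSubst_one, pSubst_X]
    ring
  have hmap1X : PowerSeries.map σ (1 + X : PowerSeries K) = (1 + X : PowerSeries K) := by
    rw [map_add, map_one, PowerSeries.map_X]
  have hDG : (1 + X) * d⁄dX K (pSubst p (PowerSeries.map σ f))
      = (p : PowerSeries K) *
        (pSubst p (PowerSeries.map σ q) * pSubst p (PowerSeries.map σ f)) := by
    rw [derivative_pSubst, hmapD]
    calc (1 + X) * (pSubst p (PowerSeries.map σ (d⁄dX K f))
            * d⁄dX K ((1 + X : PowerSeries K) ^ p - 1))
        = pSubst p (PowerSeries.map σ (d⁄dX K f))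
            * ((1 + X) * d⁄dX K ((1 + X : PowerSeries K) ^ p - 1)) := by ring
      _ = pSubst p (PowerSeries.map σ (d⁄dX K f))
            * ((p : PowerSeries K) * (1 + X : PowerSeries K) ^ p) := by rw [hdu]
      _ = (p : PowerSeries K) * (pSubst p (PowerSeries.map σ (d⁄dX K f))
            * pSubst p (1 + X : PowerSeries K)) := by rw [hpS1X]; ring
      _ = (p : PowerSeries K) * pSubst p (PowerSeries.map σ (d⁄dX K f)
            * PowerSeries.map σ (1 + X)) := by rw [← pSubst_mul, hmap1X]
      _ = (p : PowerSeries K) * pSubst p (PowerSeries.map σ ((1 + X) * d⁄dX K f)) := by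
          rw [← map_mul]
          ring_nf
      _ = (p : PowerSeries K) *
          (pSubst p (PowerSeries.map σ q) * pSubst p (PowerSeries.map σ f)) := by
          rw [← hqf, map_mul, pSubst_mul]
  -- step 3: cancellation
  have hFne : F ≠ 0 := by
    have hcc : constantCoeff F ≠ 0 := by
      rw [hF, map_prod]
      exact Finset.prod_ne_zero_iff.mpr fun ξ hξ =>
        constantCoeff_twistSubst_ne_zero hBf hfunit (hSnorm ξ hξ)
    exact fun h => hcc (by rw [h, map_zero])
  have hmain : (∑ ξ ∈ S, twistSubst ξ q)
      = (p : PowerSeries K) * pSubst p (PowerSeries.map σ q) := by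
    refine mul_right_cancel₀ hFne ?_
    calc (∑ ξ ∈ S, twistSubst ξ q) * F
        = (1 + X) * d⁄dX K F := hDF.symm
      _ = (1 + X) * d⁄dX K (pSubst p (PowerSeries.map σ f)) := by rw [← hNorm]
      _ = (p : PowerSeries K) *
          (pSubst p (PowerSeries.map σ q) * pSubst p (PowerSeries.map σ f)) := hDG
      _ = ((p : PowerSeries K) * pSubst p (PowerSeries.map σ q)) * F := by
          rw [hNorm]; ring
  -- step 4: conclusion
  calc ∑ ξ ∈ S, twistSubst ξ (q - pSubst p (PowerSeries.map σ q))
      = ∑ ξ ∈ S, (twistSubst ξ q - pSubst p (PowerSeries.map σ q)) := by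
        refine Finset.sum_congr rfl fun ξ hξ => ?_
        rw [twistSubst_sub hBq (Bnd_pSubst p hBσq) (hSnorm ξ hξ),
          twistSubst_pSubst p hBσq (hSnorm ξ hξ) ((hS ξ).1 hξ)]
    _ = (∑ ξ ∈ S, twistSubst ξ q) - S.card • pSubst p (PowerSeries.map σ q) := by
        rw [Finset.sum_sub_distrib, Finset.sum_const]
    _ = 0 := by
        rw [hmain, hcard, nsmul_eq_mul, sub_self]
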